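/- arXiv:1510.06231 — 7 statements merged into one kernel-verified Lean document; each statement's English description precedes it below -/
import Mathlib

section
/- Decryption inverts encryption in 2PAD: for prime p ≥ 5, key (x,y) ∈ Z_p × Z_p, message m ∈ Z_p, randomness z ∈ Z_p \ {0}, let b = (p*m + z) mod p² and c = (p*x*b² + p*y*b + b) mod p². Then with z' = c mod p and t = (p*(p-x)*z'² + p*(p-y)*z' + c) mod p², one has t ≡ z' (mod p) and (t - z')/p = m (as integers in {0,...,p-1}). -/
theorem stmt_1 (p x y m z : ℕ) (hp : p.Prime) (hp5 : 5 ≤ p)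
    (hx : x < p) (hy : y < p) (hm : m < p) (hz : z < p) (hz0 : z ≠ 0)
    (b c z' t : ℕ)
    (hb : b = (p * m + z) % p ^ 2)
    (hc : c = (p * x * b ^ 2 + p * y * b + b) % p ^ 2)
    (hz' : z' = c % p)
    (ht : t = (p * (p - x) * z' ^ 2 + p * (p - y) * z' + c) % p ^ 2) :
    t % p = z' ∧ (t - z') / p = m := by
  have hlt : p * m + z < p ^ 2 := by
    have h1 : p * m + z < p * m + p := by omega
    have h2 : p * m + p ≤ p * p := by nlinarith
    have : p ^ 2 = p * p := sq p
    omega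
  have hb' : b = p * m + z := by rw [hb, Nat.mod_eq_of_lt hlt]
  have hz'' : z' = z := by
    have h1 : (p * x * b ^ 2 + p * y * b + b) % p = b % p := by
      conv_lhs => rw [show p * x * b ^ 2 + p * y * b + b
        = p * (x * b ^ 2 + y * b) + b by ring]
      rw [Nat.mul_add_mod]
    have h2 : b % p = z := by
      rw [hb', Nat.mul_add_mod, Nat.mod_eq_of_lt hz]
    rw [hz', hc, Nat.mod_mod_of_dvd _ (dvd_pow_self p two_ne_zero), h1, h2]
  have key : p * (p - x) * z ^ 2 + p * (p - y) * z + (p * x * b ^ 2 + p * y * b + b)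
      = p ^ 2 * (p * x * m ^ 2 + 2 * (x * m * z) + z ^ 2 + y * m + z) + (p * m + z) := by
    subst hb'
    zify [hx.le, hy.le]
    ring
  have ht' : t = p * m + z := by
    rw [ht, hz'', hc, Nat.add_mod_mod, key, Nat.mul_add_mod, Nat.mod_eq_of_lt hlt]
  have hp0 : p ≠ 0 := hp.pos.ne'
  constructor
  · rw [ht', hz'', Nat.mul_add_mod, Nat.mod_eq_of_lt hz]
  · rw [ht', hz'']
    simp [Nat.mul_div_cancel_left m hp.pos]
end

section
/- Correctness of the Map algorithm: for prime p ≥ 5, key (x,y), and messages m₁, m₂ ∈ Z_p encrypted with the same randomness class z ∈ Z_p \ {0}, i.e., c₁ ≡ p*x*z² + p*y*z + p*m₁ + z (mod p²) and c₂ ≡ p*x*z² + p*y*z + p*m₂ + z (mod p²), the integer (c₂ - c₁ + p*m₁)/p taken modulo p equals m₂. -/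
theorem stmt_3 (p x y m₁ m₂ z c₁ c₂ : ℤ) (hp : Prime p) (hp5 : 5 ≤ p)
    (hm₁ : 0 ≤ m₁ ∧ m₁ < p) (hm₂ : 0 ≤ m₂ ∧ m₂ < p)
    (hz : 0 < z ∧ z < p)
    (hc₁ : c₁ ≡ p * x * z ^ 2 + p * y * z + p * m₁ + z [ZMOD p ^ 2])
    (hc₂ : c₂ ≡ p * x * z ^ 2 + p * y * z + p * m₂ + z [ZMOD p ^ 2]) :
    ((c₂ - c₁ + p * m₁) / p) % p = m₂ := by
  have h : c₂ - c₁ + p * m₁ ≡ p * m₂ [ZMOD p ^ 2] := by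
    have := (hc₂.sub hc₁).add_right (p * m₁)
    calc c₂ - c₁ + p * m₁ ≡ _ [ZMOD p ^ 2] := this
    _ = p * m₂ := by ring
  obtain ⟨k, hk⟩ := (Int.modEq_iff_dvd.mp h)
  have hpk : p * m₂ - (c₂ - c₁ + p * m₁) = p ^ 2 * k := hk
  have hpos : 0 < p := by linarith
  have hval : c₂ - c₁ + p * m₁ = p * (m₂ - p * k) := by ring_nf; linarith [hpk]
  rw [hval, Int.mul_ediv_cancel_left _ (by positivity : p ≠ 0)]
  have : (m₂ - p * k) % p = m₂ % p := by
    simp [Int.sub_emod, Int.mul_emod_right]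
  rw [this, Int.emod_eq_of_lt hm₂.1 hm₂.2]
end

section
/- For each prime p ≥ 5 and each pair of plaintext-ciphertext pairs (m₁, c₁), (m₂, c₂) ∈ Z_p × Z_{p²} such that c₁ mod p ≠ 0, c₂ mod p ≠ 0, and c₁ ≢ c₂ (mod p), there is exactly one key (x, y) ∈ Z_p × Z_p such that c₁ ≡ p*x*z₁² + p*y*z₁ + p*m₁ + z₁ (mod p²) and c₂ ≡ p*x*z₂² + p*y*z₂ + p*m₂ + z₂ (mod p²), where z₁ = c₁ mod p and z₂ = c₂ mod p. -/
/-- Unique solution of the 2×2 linear system over a field. -/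
lemma solve_system {F : Type*} [Field F] (z₁ z₂ b₁ b₂ : F)
    (h1 : z₁ ≠ 0) (h2 : z₂ ≠ 0) (hne : z₁ ≠ z₂) :
    ∃! xy : F × F, xy.1 * z₁ ^ 2 + xy.2 * z₁ = b₁ ∧
      xy.1 * z₂ ^ 2 + xy.2 * z₂ = b₂ := by
  have hd : z₁ - z₂ ≠ 0 := sub_ne_zero.mpr hne
  have hD : z₁ * z₂ * (z₁ - z₂) ≠ 0 := by
    exact mul_ne_zero (mul_ne_zero h1 h2) hd
  have hDD : z₁ * z₂ * (z₁ - z₂) * (z₁ * z₂ * (z₁ - z₂))⁻¹ = 1 := mul_inv_cancel₀ hD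
  refine ⟨((b₁ * z₂ - b₂ * z₁) * (z₁ * z₂ * (z₁ - z₂))⁻¹,
      (b₂ * z₁ ^ 2 - b₁ * z₂ ^ 2) * (z₁ * z₂ * (z₁ - z₂))⁻¹), ⟨?_, ?_⟩, ?_⟩
  · dsimp
    linear_combination b₁ * hDD
  · dsimp
    linear_combination b₂ * hDD
  · rintro ⟨x, y⟩ ⟨e1, e2⟩
    dsimp at e1 e2
    have hx : x = (b₁ * z₂ - b₂ * z₁) * (z₁ * z₂ * (z₁ - z₂))⁻¹ := by
      have hxD : x * (z₁ * z₂ * (z₁ - z₂)) = b₁ * z₂ - b₂ * z₁ := by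
        linear_combination z₂ * e1 - z₁ * e2
      field_simp
      linear_combination hxD
    have hy : y = (b₂ * z₁ ^ 2 - b₁ * z₂ ^ 2) * (z₁ * z₂ * (z₁ - z₂))⁻¹ := by
      have hyD : y * (z₁ * z₂ * (z₁ - z₂)) = b₂ * z₁ ^ 2 - b₁ * z₂ ^ 2 := by
        linear_combination z₁ ^ 2 * e2 - z₂ ^ 2 * e1
      field_simp
      linear_combination hyD
    exact Prod.ext hx hy

theorem stmt_7 (p m₁ m₂ c₁ c₂ : ℕ) (hp : p.Prime) (hp5 : 5 ≤ p)
    (hm₁ : m₁ < p) (hm₂ : m₂ < p) (hc₁ : c₁ < p ^ 2) (hc₂ : c₂ < p ^ 2)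
    (hz₁ : c₁ % p ≠ 0) (hz₂ : c₂ % p ≠ 0) (hne : c₁ % p ≠ c₂ % p) :
    ∃! k : ℕ × ℕ, k.1 < p ∧ k.2 < p ∧
      c₁ ≡ p * k.1 * (c₁ % p) ^ 2 + p * k.2 * (c₁ % p) + p * m₁ + c₁ % p [MOD p ^ 2] ∧
      c₂ ≡ p * k.1 * (c₂ % p) ^ 2 + p * k.2 * (c₂ % p) + p * m₂ + c₂ % p [MOD p ^ 2] := by
  haveI : Fact p.Prime := ⟨hp⟩
  haveI : NeZero p := ⟨hp.pos.ne'⟩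
  -- reduce each congruence mod p² to an equation in ZMod p
  have key : ∀ c x y m : ℕ, c < p ^ 2 →
      ((c ≡ p * x * (c % p) ^ 2 + p * y * (c % p) + p * m + c % p [MOD p ^ 2]) ↔
        ((c / p : ℕ) : ZMod p) =
          (x : ZMod p) * ((c % p : ℕ) : ZMod p) ^ 2 + (y : ZMod p) * ((c % p : ℕ) : ZMod p) + (m : ZMod p)) := by
    intro c x y m hc
    have e1 : c = p * (c / p) + c % p := (Nat.div_add_mod c p).symm
    have e2 : p * x * (c % p) ^ 2 + p * y * (c % p) + p * m + c % p
        = p * (x * (c % p) ^ 2 + y * (c % p) + m) + c % p := by ring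
    constructor
    · intro h
      rw [e2] at h
      nth_rewrite 1 [e1] at h
      have h' := Nat.ModEq.add_right_cancel' (c % p) h
      have h'' : c / p ≡ x * (c % p) ^ 2 + y * (c % p) + m [MOD p] := by
        unfold Nat.ModEq at h' ⊢
        rw [pow_two, Nat.mul_mod_mul_left, Nat.mul_mod_mul_left] at h'
        exact (mul_right_inj' hp.pos.ne').mp h'
      have := (ZMod.natCast_eq_natCast_iff _ _ _).mpr h''
      push_cast at this ⊢
      exact this
    · intro h
      have h'' : c / p ≡ x * (c % p) ^ 2 + y * (c % p) + m [MOD p] := by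
        rw [← ZMod.natCast_eq_natCast_iff]
        push_cast
        exact h
      have h' : p * (c / p) ≡ p * (x * (c % p) ^ 2 + y * (c % p) + m) [MOD p ^ 2] := by
        unfold Nat.ModEq at h'' ⊢
        rw [pow_two, Nat.mul_mod_mul_left, Nat.mul_mod_mul_left, h'']
      rw [e2]
      nth_rewrite 1 [e1]
      exact h'.add_right _
  -- nonzero/inequality facts in ZMod p
  have hlt1 : c₁ % p < p := Nat.mod_lt _ hp.pos
  have hlt2 : c₂ % p < p := Nat.mod_lt _ hp.pos
  have hz1' : ((c₁ % p : ℕ) : ZMod p) ≠ 0 := by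
    intro h
    rw [ZMod.natCast_eq_zero_iff] at h
    exact hz₁ (Nat.eq_zero_of_dvd_of_lt h hlt1)
  have hz2' : ((c₂ % p : ℕ) : ZMod p) ≠ 0 := by
    intro h
    rw [ZMod.natCast_eq_zero_iff] at h
    exact hz₂ (Nat.eq_zero_of_dvd_of_lt h hlt2)
  have hne' : ((c₁ % p : ℕ) : ZMod p) ≠ ((c₂ % p : ℕ) : ZMod p) := by
    intro h
    apply hne
    have := congrArg ZMod.val h
    rwa [ZMod.val_cast_of_lt hlt1, ZMod.val_cast_of_lt hlt2] at this
  obtain ⟨⟨X, Y⟩, ⟨hX1, hX2⟩, huniq⟩ :=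
    solve_system ((c₁ % p : ℕ) : ZMod p) ((c₂ % p : ℕ) : ZMod p)
      (((c₁ / p : ℕ) : ZMod p) - (m₁ : ZMod p)) (((c₂ / p : ℕ) : ZMod p) - (m₂ : ZMod p))
      hz1' hz2' hne'
  dsimp at hX1 hX2
  refine ⟨(X.val, Y.val), ⟨ZMod.val_lt X, ZMod.val_lt Y, ?_, ?_⟩, ?_⟩
  · rw [key _ _ _ _ hc₁]
    push_cast
    simp only [ZMod.natCast_val, ZMod.cast_id]
    linear_combination -hX1
  · rw [key _ _ _ _ hc₂]
    push_cast
    simp only [ZMod.natCast_val, ZMod.cast_id]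
    linear_combination -hX2
  · rintro ⟨x, y⟩ ⟨hx, hy, h1, h2⟩
    rw [key _ _ _ _ hc₁] at h1
    rw [key _ _ _ _ hc₂] at h2
    have := huniq ((x : ZMod p), (y : ZMod p)) ⟨by dsimp; linear_combination -h1, by dsimp; linear_combination -h2⟩
    have ex : (x : ZMod p) = X := congrArg Prod.fst this
    have ey : (y : ZMod p) = Y := congrArg Prod.snd this
    have ex' : x = X.val := by
      have := congrArg ZMod.val ex
      rwa [ZMod.val_cast_of_lt hx] at this
    have ey' : y = Y.val := by
      have := congrArg ZMod.val ey
      rwa [ZMod.val_cast_of_lt hy] at this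
    exact Prod.ext ex' ey'
end

section
/- Perfect leak-freeness counting lemma: for prime p ≥ 5, fix c₁, c₂ ∈ Z_{p²} with z₁ = c₁ mod p ≠ 0, z₂ = c₂ mod p ≠ 0, z₁ ≠ z₂, and fix m₁ ∈ Z_p. Then for every m ∈ Z_p, the number of keys (x,y) ∈ Z_p × Z_p such that c₁ is the 2PAD encryption of m₁ under (x,y) with randomness z₁ and c₂ is the 2PAD encryption of m under (x,y) with randomness z₂ is exactly 1; in particular this count is independent of m. -/
theorem stmt_8 (p m₁ c₁ c₂ : ℕ) (hp : p.Prime) (hp5 : 5 ≤ p)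
    (hm₁ : m₁ < p) (hc₁ : c₁ < p ^ 2) (hc₂ : c₂ < p ^ 2)
    (hz₁ : c₁ % p ≠ 0) (hz₂ : c₂ % p ≠ 0) (hne : c₁ % p ≠ c₂ % p) :
    ∀ m : ℕ, m < p →
      ((Finset.range p ×ˢ Finset.range p).filter (fun k =>
        c₁ % p ^ 2 = (p * k.1 * (c₁ % p) ^ 2 + p * k.2 * (c₁ % p) + p * m₁ + c₁ % p) % p ^ 2 ∧
        c₂ % p ^ 2 = (p * k.1 * (c₂ % p) ^ 2 + p * k.2 * (c₂ % p) + p * m + c₂ % p) % p ^ 2)).card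
        = 1 := by
  intro m hm
  haveI : Fact p.Prime := ⟨hp⟩
  have hp0 : 0 < p := hp.pos
  -- reduce each congruence mod p^2 to a linear equation in ZMod p
  have key : ∀ c x y mm : ℕ, c < p ^ 2 →
      (c % p ^ 2 = (p * x * (c % p) ^ 2 + p * y * (c % p) + p * mm + c % p) % p ^ 2 ↔
        ((c / p : ℕ) : ZMod p)
          = (x : ZMod p) * ((c % p : ℕ) : ZMod p) ^ 2 + (y : ZMod p) * ((c % p : ℕ) : ZMod p)
            + (mm : ZMod p)) := by
    intro c x y mm hc
    have hT : p * x * (c % p) ^ 2 + p * y * (c % p) + p * mm + c % p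
        = p * (x * (c % p) ^ 2 + y * (c % p) + mm) + c % p := by ring
    have step1 : c % p ^ 2 = (p * x * (c % p) ^ 2 + p * y * (c % p) + p * mm + c % p) % p ^ 2
        ↔ p * (c / p) + c % p ≡ p * (x * (c % p) ^ 2 + y * (c % p) + mm) + c % p [MOD p ^ 2] := by
      rw [hT, Nat.div_add_mod]
      exact Iff.rfl
    have step2 : (p * (c / p) + c % p ≡ p * (x * (c % p) ^ 2 + y * (c % p) + mm) + c % p [MOD p ^ 2])
        ↔ (c / p) % p = (x * (c % p) ^ 2 + y * (c % p) + mm) % p := by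
      constructor
      · intro h
        have h2 := Nat.ModEq.add_right_cancel (Nat.ModEq.refl (c % p)) h
        unfold Nat.ModEq at h2
        rw [pow_two, Nat.mul_mod_mul_left, Nat.mul_mod_mul_left] at h2
        exact Nat.eq_of_mul_eq_mul_left hp0 h2
      · intro h
        refine Nat.ModEq.add_right _ ?_
        unfold Nat.ModEq
        rw [pow_two, Nat.mul_mod_mul_left, Nat.mul_mod_mul_left, h]
    rw [step1, step2, ← ZMod.natCast_eq_natCast_iff']
    push_cast
    constructor <;> intro h <;> exact h
  -- ZMod p data
  have hzlt₁ : c₁ % p < p := Nat.mod_lt _ hp0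
  have hzlt₂ : c₂ % p < p := Nat.mod_lt _ hp0
  set Z₁ : ZMod p := ((c₁ % p : ℕ) : ZMod p) with hZ₁def
  set Z₂ : ZMod p := ((c₂ % p : ℕ) : ZMod p) with hZ₂def
  have hZ₁ : Z₁ ≠ 0 := by
    intro h
    rw [hZ₁def, ZMod.natCast_eq_zero_iff] at h
    exact hz₁ (Nat.eq_zero_of_dvd_of_lt h hzlt₁)
  have hZ₂ : Z₂ ≠ 0 := by
    intro h
    rw [hZ₂def, ZMod.natCast_eq_zero_iff] at h
    exact hz₂ (Nat.eq_zero_of_dvd_of_lt h hzlt₂)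
  have hZne : Z₁ ≠ Z₂ := by
    intro h
    apply hne
    have := congrArg ZMod.val h
    rwa [hZ₁def, hZ₂def, ZMod.val_cast_of_lt hzlt₁, ZMod.val_cast_of_lt hzlt₂] at this
  have hZsub : Z₁ - Z₂ ≠ 0 := sub_ne_zero.mpr hZne
  set Q₁ : ZMod p := ((c₁ / p : ℕ) : ZMod p) with hQ₁def
  set Q₂ : ZMod p := ((c₂ / p : ℕ) : ZMod p) with hQ₂def
  set M₁ : ZMod p := (m₁ : ZMod p) with hM₁def
  set M : ZMod p := (m : ZMod p) with hMdef
  set A₁ : ZMod p := (Q₁ - M₁) / Z₁ with hA₁def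
  set A₂ : ZMod p := (Q₂ - M) / Z₂ with hA₂def
  set X : ZMod p := (A₁ - A₂) / (Z₁ - Z₂) with hXdef
  set Y : ZMod p := A₁ - X * Z₁ with hYdef
  -- unique solution of the linear system
  have hA1 : A₁ * Z₁ = Q₁ - M₁ := div_mul_cancel₀ _ hZ₁
  have hA2 : A₂ * Z₂ = Q₂ - M := div_mul_cancel₀ _ hZ₂
  have hXe : X * (Z₁ - Z₂) = A₁ - A₂ := div_mul_cancel₀ _ hZsub
  have solve : ∀ x y : ZMod p,
      (Q₁ = x * Z₁ ^ 2 + y * Z₁ + M₁ ∧ Q₂ = x * Z₂ ^ 2 + y * Z₂ + M) ↔ (x = X ∧ y = Y) := by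
    intro x y
    constructor
    · rintro ⟨h1, h2⟩
      have hx : x = X := by
        have h3 : x * (Z₁ - Z₂) * (Z₁ * Z₂) = (A₁ - A₂) * (Z₁ * Z₂) := by
          linear_combination -Z₂ * h1 + Z₁ * h2 - Z₂ * hA1 + Z₁ * hA2
        have h4 := mul_right_cancel₀ (mul_ne_zero hZ₁ hZ₂) h3
        apply mul_right_cancel₀ hZsub
        rw [hXe]
        exact h4
      refine ⟨hx, ?_⟩
      rw [hYdef, ← hx]
      apply mul_right_cancel₀ hZ₁
      linear_combination -h1 - hA1
    · rintro ⟨rfl, rfl⟩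
      constructor
      · rw [hYdef]
        linear_combination -hA1
      · rw [hYdef]
        linear_combination Z₂ * hXe - hA2
  rw [Finset.card_eq_one]
  refine ⟨(X.val, Y.val), ?_⟩
  ext k
  simp only [Finset.mem_filter, Finset.mem_product, Finset.mem_range, Finset.mem_singleton]
  constructor
  · rintro ⟨⟨h1, h2⟩, e1, e2⟩
    rw [key c₁ k.1 k.2 m₁ hc₁] at e1
    rw [key c₂ k.1 k.2 m hc₂] at e2
    obtain ⟨hx, hy⟩ := (solve (k.1 : ZMod p) (k.2 : ZMod p)).mp ⟨e1, e2⟩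
    have hk1 : k.1 = X.val := by rw [← hx, ZMod.val_cast_of_lt h1]
    have hk2 : k.2 = Y.val := by rw [← hy, ZMod.val_cast_of_lt h2]
    exact Prod.ext hk1 hk2
  · rintro rfl
    have hv1 : ((X.val : ℕ) : ZMod p) = X := ZMod.natCast_rightInverse X
    have hv2 : ((Y.val : ℕ) : ZMod p) = Y := ZMod.natCast_rightInverse Y
    refine ⟨⟨ZMod.val_lt X, ZMod.val_lt Y⟩, ?_, ?_⟩
    · rw [key c₁ X.val Y.val m₁ hc₁, hv1, hv2]
      exact ((solve X Y).mpr ⟨rfl, rfl⟩).1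
    · rw [key c₂ X.val Y.val m hc₂, hv1, hv2]
      exact ((solve X Y).mpr ⟨rfl, rfl⟩).2
end

section
/- Blindness lemma: for prime p ≥ 5, fixed key (x, y) ∈ Z_p × Z_p, and fixed message m ∈ Z_p, the map z ↦ (p*x*z² + p*y*z + p*m + z) mod p² is injective from Z_p \ {0} into Z_{p²}, and the induced value c mod p equals z; hence if z is uniform on Z_p \ {0}, then c mod p is uniform on Z_p \ {0} independently of (x, y, m). -/
theorem stmt_11 (p x y m : ℕ) (hp : p.Prime) (hp5 : 5 ≤ p)
    (hx : x < p) (hy : y < p) (hm : m < p) :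
    (∀ z₁ z₂ : ℕ, z₁ < p → z₁ ≠ 0 → z₂ < p → z₂ ≠ 0 →
      (p * x * z₁ ^ 2 + p * y * z₁ + p * m + z₁) % p ^ 2
        = (p * x * z₂ ^ 2 + p * y * z₂ + p * m + z₂) % p ^ 2 → z₁ = z₂) ∧
    (∀ z : ℕ, z < p → z ≠ 0 →
      ((p * x * z ^ 2 + p * y * z + p * m + z) % p ^ 2) % p = z) ∧
    (∀ w : ℕ, w < p → w ≠ 0 →
      ((Finset.range p).filter (fun z => z ≠ 0 ∧
        ((p * x * z ^ 2 + p * y * z + p * m + z) % p ^ 2) % p = w)).card = 1) := by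
  have hmod : ∀ z : ℕ, z < p → ((p * x * z ^ 2 + p * y * z + p * m + z) % p ^ 2) % p = z := by
    intro z hz
    rw [Nat.mod_mod_of_dvd _ (dvd_pow_self p two_ne_zero)]
    have h : p * x * z ^ 2 + p * y * z + p * m + z = z + (x * z ^ 2 + y * z + m) * p := by ring
    rw [h, Nat.add_mul_mod_self_right, Nat.mod_eq_of_lt hz]
  refine ⟨?_, fun z hz _ => hmod z hz, ?_⟩
  · intro z₁ z₂ h1 _ h2 _ heq
    have h := hmod z₁ h1
    rw [heq, hmod z₂ h2] at h
    exact h.symm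
  · intro w hw hw0
    rw [show ((Finset.range p).filter (fun z => z ≠ 0 ∧
        ((p * x * z ^ 2 + p * y * z + p * m + z) % p ^ 2) % p = w)) = {w} from ?_]
    · rfl
    ext z
    simp only [Finset.mem_filter, Finset.mem_range, Finset.mem_singleton]
    constructor
    · rintro ⟨hz, _, hzw⟩
      rw [hmod z hz] at hzw
      exact hzw
    · intro h
      subst h
      exact ⟨hw, hw0, hmod _ hw⟩
end

section
/- Blind decryption protocol correctness: for prime p ≥ 5, key (x, y) ∈ Z_p × Z_p, message m ∈ Z_p, randomness z ∈ Z_p \ {0}, let c = (p*x*z² + p*y*z + p*m + z) mod p², c' = c mod p, and m' = ((-x)*c'² + (-y)*c') mod p. Then Map(c', m', c) := ((c - c' + p*m') / p) mod p equals m. -/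
theorem stmt_13 (p x y m z : ℕ) (hp : p.Prime) (hp5 : 5 ≤ p)
    (hx : x < p) (hy : y < p) (hm : m < p) (hz : z < p) (hz0 : z ≠ 0)
    (c c' m' : ℕ)
    (hc : c = (p * x * z ^ 2 + p * y * z + p * m + z) % p ^ 2)
    (hc' : c' = c % p)
    (hm' : m' = (((p - x) % p) * c' ^ 2 + ((p - y) % p) * c') % p) :
    ((c - c' + p * m') / p) % p = m := by
  have hp0 : 0 < p := by omega
  set A := x * z ^ 2 + y * z + m with hA
  have hq : A % p < p := Nat.mod_lt _ hp0
  have hcval : c = p * (A % p) + z := by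
    subst hc
    have e1 : p * x * z ^ 2 + p * y * z + p * m + z = p * A + z := by ring
    rw [e1, pow_two, Nat.add_mod, Nat.mul_mod_mul_left,
      Nat.mod_eq_of_lt (show z < p * p by nlinarith),
      Nat.mod_eq_of_lt (show p * (A % p) + z < p * p by nlinarith)]
  have hc'z : c' = z := by
    rw [hc', hcval, Nat.mul_add_mod, Nat.mod_eq_of_lt hz]
  have hsub : c - c' + p * m' = p * (A % p + m') := by
    rw [hcval, hc'z]; ring_nf; omega
  rw [hsub, Nat.mul_div_cancel_left _ hp0]
  have hm'2 : m' = ((p - x) * z ^ 2 + (p - y) * z) % p := by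
    rw [hm', hc'z]
    conv_rhs => rw [Nat.add_mod, Nat.mul_mod, Nat.mul_mod (p - y)]
    rw [Nat.add_mod, Nat.mul_mod, Nat.mul_mod ((p - y) % p)]
    simp [Nat.mod_mod]
  rw [hm'2, ← Nat.add_mod]
  have e : A + ((p - x) * z ^ 2 + (p - y) * z) = p * (z ^ 2 + z) + m := by
    have h1 : x + (p - x) = p := by omega
    have h2 : y + (p - y) = p := by omega
    calc A + ((p - x) * z ^ 2 + (p - y) * z)
        = (x + (p - x)) * z ^ 2 + (y + (p - y)) * z + m := by rw [hA]; ring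
      _ = p * (z ^ 2 + z) + m := by rw [h1, h2]; ring
  rw [e, Nat.mul_add_mod, Nat.mod_eq_of_lt hm]
end

section
/- Knowing one plaintext-ciphertext pair (m₁, c₁) of 2PAD determines the decryption of every ciphertext c₂ with c₂ ≡ c₁ (mod p): if c₁ and c₂ are both valid encryptions under the same key (x,y) with the same randomness z = c₁ mod p = c₂ mod p ≠ 0, of messages m₁ and m₂ respectively, then m₂ ≡ m₁ + (c₂ - c₁)/p (mod p). -/
theorem stmt_15 (p x y m₁ m₂ z c₁ c₂ : ℤ) (hp : Prime p) (hp5 : 5 ≤ p)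
    (hm₁ : 0 ≤ m₁ ∧ m₁ < p) (hm₂ : 0 ≤ m₂ ∧ m₂ < p)
    (hz : 0 < z ∧ z < p) (hz₁ : z = c₁ % p) (hz₂ : z = c₂ % p)
    (hc₁ : c₁ ≡ p * x * z ^ 2 + p * y * z + p * m₁ + z [ZMOD p ^ 2])
    (hc₂ : c₂ ≡ p * x * z ^ 2 + p * y * z + p * m₂ + z [ZMOD p ^ 2]) :
    m₂ ≡ m₁ + (c₂ - c₁) / p [ZMOD p] := by
  have hp0 : p ≠ 0 := hp.ne_zero
  have hsub : c₂ - c₁ ≡ p * (m₂ - m₁) [ZMOD p ^ 2] := by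
    have h := hc₂.sub hc₁
    convert h using 1
    ring
  obtain ⟨k, hk⟩ := (Int.modEq_iff_dvd.mp hsub.symm)
  have hc : c₂ - c₁ = p * (m₂ - m₁) + p ^ 2 * k := by linarith
  have hdiv : (c₂ - c₁) / p = m₂ - m₁ + p * k := by
    rw [hc]
    have : p * (m₂ - m₁) + p ^ 2 * k = p * (m₂ - m₁ + p * k) := by ring
    rw [this, Int.mul_ediv_cancel_left _ hp0]
  rw [hdiv]
  have : m₁ + (m₂ - m₁ + p * k) - m₂ = p * k := by ring
  exact (Int.modEq_iff_dvd.mpr ⟨k, by linarith⟩)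
end
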